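/- Let L be a positive integer, let a, M be positive integers dividing L, and let g ∈ ℂ^L generate a Gabor frame G(g,a,M) with frame operator S. Then the canonical dual window γ = S^{−1}g is a dual window for g, and it is the unique minimizer of the ℓ²-norm among all dual windows: for every dual window h ∈ ℂ^L with h ≠ γ, ‖γ‖₂ < ‖h‖₂. -/

import Mathlib

open Complex Finset


/-- The Gabor atom `M_{m/M} T_n g` on `ℂ^L` (identified with `ZMod L → ℂ`):
circular translation by `n` followed by modulation `e^{2πiml/M}`. -/
noncomputable def gaborAtom (L M : ℕ) [NeZero L] (g : ZMod L → ℂ) (m n : ℕ) :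
    ZMod L → ℂ :=
  fun l => g (l - (n : ZMod L)) *
    Complex.exp (2 * Real.pi * Complex.I * (m : ℂ) * (l.val : ℂ) / (M : ℂ))

/-- The inner product `⟨f, g⟩ = ∑_{l=0}^{L-1} f[l]·conj(g[l])` on `ℂ^L`. -/
noncomputable def ipL (L : ℕ) [NeZero L] (f g : ZMod L → ℂ) : ℂ :=
  ∑ l : ZMod L, f l * star (g l)

set_option linter.unusedSectionVars false


noncomputable section GaborAux

/-- primitive `L`-th root of unity. -/
def zL (L : ℕ) : ℂ := Complex.exp (2 * Real.pi * Complex.I / L)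

/-- integer powers of `zL`. -/
def EL (L : ℕ) (t : ℤ) : ℂ := zL L ^ t

variable {L : ℕ} [NeZero L]

lemma zL_prim : IsPrimitiveRoot (zL L) L := Complex.isPrimitiveRoot_exp L (NeZero.ne L)

lemma zL_ne_zero : zL L ≠ 0 := Complex.exp_ne_zero _

lemma EL_add (s t : ℤ) : EL L (s + t) = EL L s * EL L t := zpow_add₀ zL_ne_zero s t

lemma EL_eq_one_iff (t : ℤ) : EL L t = 1 ↔ (L:ℤ) ∣ t := zL_prim.zpow_eq_one_iff_dvd t

lemma EL_eq_of_mod {s t : ℤ} (h : (L:ℤ) ∣ s - t) : EL L s = EL L t := by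
  have h1 : EL L (s - t) = 1 := (EL_eq_one_iff _).2 h
  have h2 : s - t + t = s := by ring
  rw [← h2, EL_add, h1, one_mul]

lemma star_zL : star (zL L) = (zL L)⁻¹ := by
  show (starRingEnd ℂ) (zL L) = (zL L)⁻¹
  rw [zL, ← Complex.exp_conj]
  have : (starRingEnd ℂ) (2 * Real.pi * Complex.I / (L:ℂ)) = -(2 * Real.pi * Complex.I / L) := by
    rw [map_div₀, map_mul, map_mul]
    simp [Complex.conj_I, Complex.conj_ofReal, map_ofNat]
    ring
  rw [this, Complex.exp_neg]

lemma star_EL (t : ℤ) : star (EL L t) = EL L (-t) := by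
  show (starRingEnd ℂ) (zL L ^ t) = EL L (-t)
  rw [map_zpow₀ (starRingEnd ℂ)]
  have : (starRingEnd ℂ) (zL L) = (zL L)⁻¹ := star_zL
  rw [this, inv_zpow, ← zpow_neg]
  rfl

lemma sum_EL_orth {M : ℕ} (hM : 0 < M) (hML : M ∣ L) (t : ℤ) :
    ∑ m : Fin M, EL L (((L/M : ℕ) : ℤ) * (m : ℕ) * t) = if (M:ℤ) ∣ t then (M:ℂ) else 0 := by
  have hLM : ((L/M : ℕ) : ℤ) * (M : ℤ) = (L : ℤ) := by
    exact_mod_cast congrArg (Nat.cast : ℕ → ℤ) (Nat.div_mul_cancel hML)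
  set ω : ℂ := EL L (((L/M : ℕ) : ℤ) * t) with hω
  have hterm : ∀ m : Fin M, EL L (((L/M : ℕ) : ℤ) * (m : ℕ) * t) = ω ^ (m : ℕ) := by
    intro m
    rw [hω, EL, EL, ← zpow_natCast (zL L ^ (((L/M : ℕ) : ℤ) * t)), ← zpow_mul]
    congr 1
    ring
  rw [Finset.sum_congr rfl (fun m _ => hterm m), Fin.sum_univ_eq_sum_range (fun i => ω ^ i)]
  have hωM : ω ^ (M : ℕ) = 1 := by
    rw [hω, EL, ← zpow_natCast (zL L ^ _), ← zpow_mul]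
    have : ((L/M : ℕ) : ℤ) * t * (M : ℕ) = (L : ℤ) * t := by
      rw [mul_comm (((L/M : ℕ) : ℤ) * t) ((M : ℕ) : ℤ)]
      rw [← mul_assoc]
      rw [mul_comm ((M:ℕ):ℤ) ((L/M : ℕ) : ℤ), hLM]
    rw [this, zpow_mul]
    have h1 : zL L ^ (L : ℤ) = 1 := (EL_eq_one_iff (L:ℤ)).2 dvd_rfl
    rw [h1, one_zpow]
  by_cases hdvd : (M:ℤ) ∣ t
  · have hω1 : ω = 1 := by
      rw [hω]
      apply (EL_eq_one_iff _).2
      obtain ⟨k, hk⟩ := hdvd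
      exact ⟨k, by rw [hk, ← mul_assoc, hLM]⟩
    simp [hω1, hdvd]
  · have hω1 : ω ≠ 1 := by
      intro hc
      obtain ⟨k, hk⟩ := (EL_eq_one_iff _).1 (hω ▸ hc)
      apply hdvd
      have hLM0 : ((L/M : ℕ) : ℤ) ≠ 0 := by
        have : 0 < L / M := Nat.div_pos (Nat.le_of_dvd (Nat.pos_of_ne_zero (NeZero.ne L)) hML) hM
        exact_mod_cast this.ne'
      have : ((L/M : ℕ) : ℤ) * t = ((L/M : ℕ) : ℤ) * ((M:ℤ) * k) := by
        rw [hk, ← hLM]; ring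
      have ht : t = (M:ℤ) * k := by
        exact mul_left_cancel₀ hLM0 this
      exact ⟨k, ht⟩
    rw [geom_sum_eq hω1, hωM]
    simp [hdvd]

/-- reduction mod `d` of an element of `ZMod L`. -/
def modd (d : ℕ) {L : ℕ} [NeZero L] (x : ZMod L) : ZMod d := (x.val : ZMod d)

lemma modd_natCast {d : ℕ} (hd : d ∣ L) (k : ℕ) : modd d ((k : ZMod L)) = (k : ZMod d) := by
  rw [modd, ZMod.val_natCast]
  exact (ZMod.natCast_eq_natCast_iff _ _ _).2 ((Nat.mod_modEq k L).of_dvd hd)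

lemma modd_add {d : ℕ} (hd : d ∣ L) (x y : ZMod L) :
    modd d (x + y) = modd d x + modd d y := by
  rw [modd, ZMod.val_add]
  have h1 : (((x.val + y.val) % L : ℕ) : ZMod d) = ((x.val + y.val : ℕ) : ZMod d) :=
    (ZMod.natCast_eq_natCast_iff _ _ _).2 ((Nat.mod_modEq _ L).of_dvd hd)
  rw [h1]
  push_cast
  rfl

lemma modd_zero (d : ℕ) : modd d (0 : ZMod L) = 0 := by
  simp [modd, ZMod.val_zero]

lemma modd_neg {d : ℕ} (hd : d ∣ L) (x : ZMod L) : modd d (-x) = - modd d x := by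
  have := modd_add hd x (-x)
  rw [add_neg_cancel, modd_zero] at this
  linear_combination -this

lemma modd_sub {d : ℕ} (hd : d ∣ L) (x y : ZMod L) :
    modd d (x - y) = modd d x - modd d y := by
  rw [sub_eq_add_neg, modd_add hd, modd_neg hd, sub_eq_add_neg]

lemma modd_eq_zero_iff {d : ℕ} [NeZero d] (x : ZMod L) : modd d x = 0 ↔ d ∣ x.val :=
  ZMod.natCast_eq_zero_iff _ _

/-- the embedding `ZMod (L/a) → ZMod L`, `n ↦ n·a`. -/
def iota (L a : ℕ) [NeZero L] [NeZero (L/a)] (n : ZMod (L/a)) : ZMod L :=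
  ((n.val * a : ℕ) : ZMod L)

section iotasec

variable {a : ℕ} [NeZero (L/a)]

lemma iota_mul_mod (haL : a ∣ L) (x : ℕ) :
    (((x % (L/a)) * a : ℕ) : ZMod L) = ((x * a : ℕ) : ZMod L) := by
  apply (ZMod.natCast_eq_natCast_iff _ _ _).2
  have h1 : x % (L/a) ≡ x [MOD L/a] := Nat.mod_modEq x (L/a)
  have h2 := h1.mul_right' (c := a)
  rwa [Nat.div_mul_cancel haL] at h2

lemma iota_add (haL : a ∣ L) (n n' : ZMod (L/a)) :
    iota L a (n + n') = iota L a n + iota L a n' := by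
  rw [iota, ZMod.val_add, iota_mul_mod haL]
  push_cast [add_mul, iota]
  rfl

lemma iota_zero : iota L a 0 = 0 := by simp [iota, ZMod.val_zero]

lemma iota_neg (haL : a ∣ L) (n : ZMod (L/a)) : iota L a (-n) = - iota L a n := by
  have := iota_add haL n (-n)
  rw [add_neg_cancel, iota_zero] at this
  linear_combination -this

lemma modd_iota (haL : a ∣ L) (n : ZMod (L/a)) : modd a (iota L a n) = 0 := by
  rw [iota, modd_natCast haL]
  push_cast
  simp

lemma iota_val_div (ha : 0 < a) (haL : a ∣ L) (s : ZMod L) (hs : modd a s = 0) :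
    iota L a ((s.val / a : ℕ) : ZMod (L/a)) = s := by
  haveI : NeZero a := ⟨ha.ne'⟩
  have hdvd : a ∣ s.val := (modd_eq_zero_iff s).1 hs
  rw [iota, ZMod.val_natCast, iota_mul_mod haL, Nat.div_mul_cancel hdvd,
    ZMod.natCast_zmod_val]

lemma sum_iota_fin (F : ZMod L → ℂ) :
    ∑ n : Fin (L/a), F ((((n:ℕ) * a : ℕ)) : ZMod L) = ∑ n : ZMod (L/a), F (iota L a n) := by
  apply Fintype.sum_bijective (fun n : Fin (L/a) => ((n : ℕ) : ZMod (L/a)))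
  · rw [Fintype.bijective_iff_injective_and_card]
    constructor
    · intro n n' h
      have := congrArg ZMod.val h
      rwa [ZMod.val_cast_of_lt n.isLt, ZMod.val_cast_of_lt n'.isLt, ← Fin.ext_iff] at this
    · simp [ZMod.card]
  · intro n
    congr 1
    rw [iota, ZMod.val_cast_of_lt n.isLt]

lemma sum_zmod_shift {k : ℕ} [NeZero k] (G : ZMod k → ℂ) (c : ZMod k) :
    ∑ n : ZMod k, G n = ∑ n : ZMod k, G (n + c) :=
  (Fintype.sum_equiv (Equiv.addRight c) _ _ (fun n => rfl)).symm

lemma coset_sum (ha : 0 < a) (haL : a ∣ L) (F : ZMod L → ℂ) (x : ZMod L) :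
    ∑ l : ZMod L, (if modd a (l - x) = 0 then F l else 0)
      = ∑ n : ZMod (L/a), F (x + iota L a n) := by
  haveI : NeZero a := ⟨ha.ne'⟩
  rw [← Finset.sum_filter]
  symm
  apply Finset.sum_bij' (i := fun (n : ZMod (L/a)) _ => x + iota L a n)
    (j := fun (l : ZMod L) _ => (((l - x).val / a : ℕ) : ZMod (L/a)))
  · intro n _
    simp only [Finset.mem_filter, Finset.mem_univ, true_and]
    rw [add_sub_cancel_left]
    exact modd_iota haL n
  · intro l hl
    exact Finset.mem_univ _
  · intro n _
    rw [add_sub_cancel_left, iota, ZMod.val_natCast]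
    have hlt : n.val * a < L :=
      lt_of_lt_of_le ((Nat.mul_lt_mul_right ha).2 (ZMod.val_lt n))
        (le_of_eq (Nat.div_mul_cancel haL))
    rw [Nat.mod_eq_of_lt hlt, Nat.mul_div_cancel _ ha, ZMod.natCast_zmod_val]
  · intro l hl
    simp only [Finset.mem_filter, Finset.mem_univ, true_and] at hl
    rw [iota_val_div ha haL _ hl]
    ring
  · intro n _
    rfl

lemma coset_count (ha : 0 < a) (haL : a ∣ L) (x : ZMod L) :
    ∑ l : ZMod L, (if modd a (l - x) = 0 then (1:ℂ) else 0) = ((L/a : ℕ) : ℂ) := by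
  rw [coset_sum ha haL (fun _ => (1:ℂ)) x]
  simp [ZMod.card]

end iotasec

section gaborsec

variable {a M : ℕ} [NeZero (L/a)]

/-- modulation-free version of the Gabor atom with `ZMod L` translation. -/
def atomZ (L M : ℕ) [NeZero L] (g : ZMod L → ℂ) (m : ℕ) (c : ZMod L) : ZMod L → ℂ :=
  fun l => g (l - c) * EL L ((L / M * m * l.val : ℕ) : ℤ)

lemma gaborAtom_eq (hM : 0 < M) (hML : M ∣ L) (g : ZMod L → ℂ) (m c : ℕ) :
    gaborAtom L M g m c = atomZ L M g m (c : ZMod L) := by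
  funext l
  rw [gaborAtom, atomZ]
  congr 1
  rw [EL, zpow_natCast, zL, ← Complex.exp_nat_mul]
  congr 1
  have hL0 : (L:ℂ) ≠ 0 := by exact_mod_cast (NeZero.ne L)
  have hM0 : (M:ℂ) ≠ 0 := by exact_mod_cast hM.ne'
  have hLM : ((L/M : ℕ) : ℂ) * M = L := by exact_mod_cast congrArg (Nat.cast : ℕ → ℂ) (Nat.div_mul_cancel hML)
  push_cast
  field_simp
  ring_nf
  rw [← hLM]; ring

/-- mixed correlation kernel. -/
def KG2 (L a : ℕ) [NeZero L] [NeZero (L/a)] (w g : ZMod L → ℂ) (l p : ZMod L) : ℂ :=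
  ∑ n : ZMod (L/a), star (w (p - iota L a n)) * g (l - iota L a n)

lemma KG2_shift (ha : 0 < a) (haL : a ∣ L) (w g : ZMod L → ℂ) (l p s : ZMod L)
    (hs : modd a s = 0) :
    KG2 L a w g (l + s) (p + s) = KG2 L a w g l p := by
  have hc : iota L a ((s.val / a : ℕ) : ZMod (L/a)) = s := iota_val_div ha haL s hs
  rw [KG2, KG2, sum_zmod_shift (fun n => star (w (p + s - iota L a n)) * g (l + s - iota L a n))
    ((s.val / a : ℕ) : ZMod (L/a))]
  apply Finset.sum_congr rfl
  intro n _
  rw [iota_add haL, hc]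
  have h1 : p + s - (iota L a n + s) = p - iota L a n := by ring
  have h2 : l + s - (iota L a n + s) = l - iota L a n := by ring
  rw [h1, h2]

lemma sum_m_orth (hM : 0 < M) (hML : M ∣ L) (p l : ZMod L) :
    ∑ m : Fin M, star (EL L ((L / M * (m:ℕ) * p.val : ℕ) : ℤ)) *
        EL L ((L / M * (m:ℕ) * l.val : ℕ) : ℤ)
      = if modd M (l - p) = 0 then (M:ℂ) else 0 := by
  haveI : NeZero M := ⟨hM.ne'⟩
  have hterm : ∀ m : Fin M,
      star (EL L ((L / M * (m:ℕ) * p.val : ℕ) : ℤ)) * EL L ((L / M * (m:ℕ) * l.val : ℕ) : ℤ)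
        = EL L (((L/M : ℕ) : ℤ) * (m:ℕ) * ((l.val : ℤ) - (p.val : ℤ))) := by
    intro m
    rw [star_EL, ← EL_add]
    congr 1
    push_cast
    ring
  rw [Finset.sum_congr rfl (fun m _ => hterm m), sum_EL_orth hM hML]
  have hiff : ((M:ℤ) ∣ (l.val : ℤ) - (p.val : ℤ)) ↔ modd M (l - p) = 0 := by
    rw [modd_sub hML, sub_eq_zero, ← ZMod.intCast_zmod_eq_zero_iff_dvd, Int.cast_sub,
      sub_eq_zero, Int.cast_natCast, Int.cast_natCast]
    exact Iff.rfl
  simp only [hiff]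

lemma walnut_mixed (ha : 0 < a) (hM : 0 < M) (haL : a ∣ L) (hML : M ∣ L)
    (w g f : ZMod L → ℂ) (l : ZMod L) :
    ∑ n : Fin (L/a), ∑ m : Fin M,
        ipL L f (gaborAtom L M w m ((n:ℕ) * a)) * gaborAtom L M g m ((n:ℕ) * a) l
      = ∑ p : ZMod L,
          (if modd M (l - p) = 0 then (M:ℂ) * KG2 L a w g l p * f p else 0) := by
  haveI : NeZero M := ⟨hM.ne'⟩
  have hin : ∀ c : ZMod L,
      ∑ m : Fin M, ipL L f (atomZ L M w m c) * atomZ L M g m c l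
        = ∑ p : ZMod L,
            (if modd M (l - p) = 0 then (M:ℂ) * (star (w (p - c)) * g (l - c)) * f p else 0) := by
    intro c
    have h1 : ∀ m : Fin M, ipL L f (atomZ L M w m c) * atomZ L M g m c l
        = ∑ p : ZMod L, f p * star (w (p - c)) * g (l - c) *
            (star (EL L ((L / M * (m:ℕ) * p.val : ℕ) : ℤ)) *
              EL L ((L / M * (m:ℕ) * l.val : ℕ) : ℤ)) := by
      intro m
      rw [ipL, Finset.sum_mul]
      apply Finset.sum_congr rfl
      intro p _
      show f p * star (atomZ L M w m c p) * atomZ L M g m c l = _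
      rw [atomZ, atomZ]
      simp only [star_mul']
      ring
    rw [Finset.sum_congr rfl (fun m _ => h1 m), Finset.sum_comm]
    apply Finset.sum_congr rfl
    intro p _
    rw [← Finset.mul_sum, sum_m_orth hM hML p l]
    by_cases hc : modd M (l - p) = 0
    · simp only [hc, if_pos]
      ring
    · simp [hc]
  calc ∑ n : Fin (L/a), ∑ m : Fin M,
        ipL L f (gaborAtom L M w m ((n:ℕ) * a)) * gaborAtom L M g m ((n:ℕ) * a) l
      = ∑ n : Fin (L/a), ∑ m : Fin M,
          ipL L f (atomZ L M w m ((((n:ℕ) * a : ℕ)) : ZMod L)) *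
            atomZ L M g m ((((n:ℕ) * a : ℕ)) : ZMod L) l := by
        simp only [gaborAtom_eq hM hML]
    _ = ∑ n : ZMod (L/a), ∑ m : Fin M,
          ipL L f (atomZ L M w m (iota L a n)) * atomZ L M g m (iota L a n) l :=
        sum_iota_fin (fun c => ∑ m : Fin M, ipL L f (atomZ L M w m c) * atomZ L M g m c l)
    _ = ∑ n : ZMod (L/a), ∑ p : ZMod L,
          (if modd M (l - p) = 0
            then (M:ℂ) * (star (w (p - iota L a n)) * g (l - iota L a n)) * f p else 0) :=
        Finset.sum_congr rfl (fun n _ => hin _)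
    _ = ∑ p : ZMod L, ∑ n : ZMod (L/a),
          (if modd M (l - p) = 0
            then (M:ℂ) * (star (w (p - iota L a n)) * g (l - iota L a n)) * f p else 0) :=
        Finset.sum_comm
    _ = ∑ p : ZMod L,
          (if modd M (l - p) = 0 then (M:ℂ) * KG2 L a w g l p * f p else 0) := by
        apply Finset.sum_congr rfl
        intro p _
        by_cases hc : modd M (l - p) = 0
        · simp only [hc, if_pos]
          rw [KG2, Finset.mul_sum, Finset.sum_mul]
        · simp [hc]

lemma modd_mul_a (haL : a ∣ L) (n : ℕ) : modd a (((n * a : ℕ)) : ZMod L) = 0 := by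
  rw [modd_natCast haL]
  push_cast
  simp

lemma EL_val_eq (hM : 0 < M) (hML : M ∣ L) (m : ℕ) {x y : ZMod L}
    (hxy : modd M (x - y) = 0) :
    EL L ((L / M * m * x.val : ℕ) : ℤ) = EL L ((L / M * m * y.val : ℕ) : ℤ) := by
  haveI : NeZero M := ⟨hM.ne'⟩
  apply EL_eq_of_mod
  have hdvd : (M:ℤ) ∣ (x.val : ℤ) - (y.val : ℤ) := by
    rw [modd_sub hML, sub_eq_zero] at hxy
    rw [← ZMod.intCast_zmod_eq_zero_iff_dvd, Int.cast_sub, Int.cast_natCast, Int.cast_natCast,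
      sub_eq_zero]
    exact hxy
  obtain ⟨k, hk⟩ := hdvd
  have hLM : ((L/M : ℕ) : ℤ) * (M:ℤ) = L := by
    exact_mod_cast congrArg (Nat.cast : ℕ → ℤ) (Nat.div_mul_cancel hML)
  refine ⟨(m:ℤ) * k, ?_⟩
  rw [Nat.cast_mul, Nat.cast_mul, Nat.cast_mul, Nat.cast_mul, ← hLM]
  linear_combination (((L/M : ℕ) : ℤ) * (m:ℤ)) * hk

end gaborsec

end GaborAux

/-- The Gabor frame operator of `G(g,a,M)` on `ℂ^L`:
`Sf = ∑_{n=0}^{L/a-1} ∑_{m=0}^{M-1} ⟨f, g_{m,n}⟩ g_{m,n}` with `g_{m,n} = M_{m/M}T_{na}g`. -/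
noncomputable def frameOp (L a M : ℕ) [NeZero L] (g : ZMod L → ℂ)
    (f : ZMod L → ℂ) : ZMod L → ℂ :=
  fun l => ∑ n : Fin (L / a), ∑ m : Fin M,
    ipL L f (gaborAtom L M g m ((n : ℕ) * a)) * gaborAtom L M g m ((n : ℕ) * a) l

/-- `h` is a dual window for `g` in `G(g,a,M)`:
`f = ∑_{m,n} ⟨f, M_{m/M}T_{na}h⟩ · M_{m/M}T_{na}g` for every `f ∈ ℂ^L`. -/
noncomputable def IsDualWindow (L a M : ℕ) [NeZero L] (g h : ZMod L → ℂ) : Prop :=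
  ∀ f : ZMod L → ℂ, ∀ l : ZMod L,
    f l = ∑ n : Fin (L / a), ∑ m : Fin M,
      ipL L f (gaborAtom L M h m ((n : ℕ) * a)) * gaborAtom L M g m ((n : ℕ) * a) l

noncomputable section GaborAux2

set_option linter.unusedSectionVars false

open Complex Finset

variable {L : ℕ} [NeZero L] {a M : ℕ} [NeZero (L/a)]

lemma frameOp_walnut (ha : 0 < a) (hM : 0 < M) (haL : a ∣ L) (hML : M ∣ L)
    (g f : ZMod L → ℂ) (l : ZMod L) :
    frameOp L a M g f l
      = ∑ p : ZMod L, (if modd M (l - p) = 0 then (M:ℂ) * KG2 L a g g l p * f p else 0) :=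
  walnut_mixed ha hM haL hML g g f l

lemma frameOp_atom (ha : 0 < a) (hM : 0 < M) (haL : a ∣ L) (hML : M ∣ L)
    (g h : ZMod L → ℂ) (m n : ℕ) :
    frameOp L a M g (gaborAtom L M h m (n * a))
      = gaborAtom L M (frameOp L a M g h) m (n * a) := by
  haveI : NeZero M := ⟨hM.ne'⟩
  funext l
  have hc : modd a (((n * a : ℕ)) : ZMod L) = 0 := modd_mul_a haL n
  set c : ZMod L := ((n * a : ℕ) : ZMod L) with hcdef
  rw [gaborAtom_eq hM hML, gaborAtom_eq hM hML]
  rw [frameOp_walnut ha hM haL hML]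
  show _ = frameOp L a M g h (l - c) * EL L ((L / M * m * l.val : ℕ) : ℤ)
  rw [frameOp_walnut ha hM haL hML, Finset.sum_mul]
  rw [show (∑ p : ZMod L,
        (if modd M (l - p) = 0 then (M:ℂ) * KG2 L a g g l p * atomZ L M h m c p else 0))
      = ∑ p : ZMod L,
        (if modd M (l - (p + c)) = 0
          then (M:ℂ) * KG2 L a g g l (p + c) * atomZ L M h m c (p + c) else 0) from
    sum_zmod_shift (fun p => if modd M (l - p) = 0
      then (M:ℂ) * KG2 L a g g l p * atomZ L M h m c p else 0) c]
  apply Finset.sum_congr rfl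
  intro p _
  have harg : l - (p + c) = l - c - p := by ring
  rw [harg]
  by_cases hq : modd M (l - c - p) = 0
  · simp only [if_pos hq]
    have hKG : KG2 L a g g l (p + c) = KG2 L a g g (l - c) p := by
      have := KG2_shift ha haL g g (l - c) p c hc
      rw [show l - c + c = l from by ring] at this
      exact this
    have hEL : EL L ((L / M * m * (p + c).val : ℕ) : ℤ)
        = EL L ((L / M * m * l.val : ℕ) : ℤ) := by
      apply EL_val_eq hM hML
      have : (p + c) - l = -(l - c - p) := by ring
      rw [this, modd_neg hML, hq, neg_zero]
    rw [atomZ]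
    show (M:ℂ) * KG2 L a g g l (p + c) * (h (p + c - c) * EL L ((L / M * m * (p+c).val : ℕ) : ℤ)) = _
    rw [hKG, hEL, show p + c - c = p from by ring]
    ring
  · simp [hq]

lemma star_ipL (f g : ZMod L → ℂ) : star (ipL L f g) = ipL L g f := by
  rw [ipL, ipL, star_sum]
  apply Finset.sum_congr rfl
  intro l _
  rw [star_mul', star_star]
  ring

lemma frameOp_selfadj (g f w : ZMod L → ℂ) :
    ipL L (frameOp L a M g f) w = ipL L f (frameOp L a M g w) := by
  have h1 : ipL L (frameOp L a M g f) w
      = ∑ n : Fin (L/a), ∑ m : Fin M,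
          ipL L f (gaborAtom L M g m ((n:ℕ)*a)) * ipL L (gaborAtom L M g m ((n:ℕ)*a)) w := by
    rw [ipL]
    have hl : ∀ l : ZMod L, frameOp L a M g f l * star (w l)
        = ∑ n : Fin (L/a), ∑ m : Fin M,
            ipL L f (gaborAtom L M g m ((n:ℕ)*a)) *
              (gaborAtom L M g m ((n:ℕ)*a) l * star (w l)) := by
      intro l
      show (∑ n : Fin (L/a), ∑ m : Fin M,
          ipL L f (gaborAtom L M g m ((n:ℕ)*a)) * gaborAtom L M g m ((n:ℕ)*a) l) * star (w l) = _
      rw [Finset.sum_mul]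
      apply Finset.sum_congr rfl
      intro n _
      rw [Finset.sum_mul]
      apply Finset.sum_congr rfl
      intro m _
      ring
    rw [Finset.sum_congr rfl (fun l _ => hl l), Finset.sum_comm]
    apply Finset.sum_congr rfl
    intro n _
    rw [Finset.sum_comm]
    apply Finset.sum_congr rfl
    intro m _
    rw [← Finset.mul_sum]
    rfl
  have h2 : ipL L f (frameOp L a M g w)
      = ∑ n : Fin (L/a), ∑ m : Fin M,
          ipL L (gaborAtom L M g m ((n:ℕ)*a)) w * ipL L f (gaborAtom L M g m ((n:ℕ)*a)) := by
    rw [ipL]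
    have hl : ∀ l : ZMod L, f l * star (frameOp L a M g w l)
        = ∑ n : Fin (L/a), ∑ m : Fin M,
            ipL L (gaborAtom L M g m ((n:ℕ)*a)) w *
              (f l * star (gaborAtom L M g m ((n:ℕ)*a) l)) := by
      intro l
      show f l * star (∑ n : Fin (L/a), ∑ m : Fin M,
          ipL L w (gaborAtom L M g m ((n:ℕ)*a)) * gaborAtom L M g m ((n:ℕ)*a) l) = _
      rw [star_sum, Finset.mul_sum]
      apply Finset.sum_congr rfl
      intro n _
      rw [star_sum, Finset.mul_sum]
      apply Finset.sum_congr rfl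
      intro m _
      rw [star_mul', star_ipL]
      ring
    rw [Finset.sum_congr rfl (fun l _ => hl l), Finset.sum_comm]
    apply Finset.sum_congr rfl
    intro n _
    rw [Finset.sum_comm]
    apply Finset.sum_congr rfl
    intro m _
    rw [← Finset.mul_sum]
    rfl
  rw [h1, h2]
  apply Finset.sum_congr rfl
  intro n _
  apply Finset.sum_congr rfl
  intro m _
  ring

/-- cutoff of a translate of `g` to a coset of `aℤ/Lℤ`. -/
def Bwin (L a : ℕ) [NeZero L] (g : ZMod L → ℂ) (x t : ZMod L) : ZMod L → ℂ :=
  fun l => if modd a (l - x) = 0 then g (l - t) else 0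

lemma frameOp_B (ha : 0 < a) (hM : 0 < M) (haL : a ∣ L) (hML : M ∣ L)
    (g : ZMod L → ℂ) (x t : ZMod L) :
    frameOp L a M g (Bwin L a g x t)
      = ∑ q : ZMod L, (if modd M q = 0 then (M:ℂ) * KG2 L a g g (x + q) x else 0) •
          Bwin L a g (x + q) (q + t) := by
  funext l
  rw [frameOp_walnut ha hM haL hML, Finset.sum_apply]
  rw [show (∑ p : ZMod L,
        (if modd M (l - p) = 0 then (M:ℂ) * KG2 L a g g l p * Bwin L a g x t p else 0))
      = ∑ q : ZMod L,
        (if modd M (l - (l - q)) = 0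
          then (M:ℂ) * KG2 L a g g l (l - q) * Bwin L a g x t (l - q) else 0) from
    (Fintype.sum_equiv (Equiv.subLeft l)
      (fun q => if modd M (l - (l - q)) = 0
        then (M:ℂ) * KG2 L a g g l (l - q) * Bwin L a g x t (l - q) else 0)
      (fun p => if modd M (l - p) = 0
        then (M:ℂ) * KG2 L a g g l p * Bwin L a g x t p else 0)
      (fun q => rfl)).symm]
  apply Finset.sum_congr rfl
  intro q _
  rw [show l - (l - q) = q from by ring, Pi.smul_apply, smul_eq_mul]
  by_cases hq : modd M q = 0
  · simp only [if_pos hq]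
    rw [Bwin, Bwin]
    rw [show l - q - x = l - (x + q) from by ring]
    by_cases hin : modd a (l - (x + q)) = 0
    · simp only [if_pos hin]
      have hKG : KG2 L a g g l (l - q) = KG2 L a g g (x + q) x := by
        have := KG2_shift ha haL g g (x + q) x (l - (x + q)) hin
        rw [show x + q + (l - (x + q)) = l from by ring,
          show x + (l - (x + q)) = l - q from by ring] at this
        exact this
      rw [hKG, show l - q - t = l - (q + t) from by ring]
    · simp [hin]
  · simp [hq]

/-- the frame operator as a linear map. -/
def frameOpL (L a M : ℕ) [NeZero L] (g : ZMod L → ℂ) :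
    (ZMod L → ℂ) →ₗ[ℂ] (ZMod L → ℂ) where
  toFun := frameOp L a M g
  map_add' f1 f2 := by
    funext l
    have hip : ∀ v : ZMod L → ℂ, ipL L (f1 + f2) v = ipL L f1 v + ipL L f2 v := by
      intro v
      rw [ipL, ipL, ipL, ← Finset.sum_add_distrib]
      apply Finset.sum_congr rfl
      intro p _
      rw [Pi.add_apply]
      ring
    show frameOp L a M g (f1 + f2) l = frameOp L a M g f1 l + frameOp L a M g f2 l
    simp only [frameOp]
    simp only [hip, add_mul, Finset.sum_add_distrib]
  map_smul' c f := by
    funext l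
    have hip : ∀ v : ZMod L → ℂ, ipL L (c • f) v = c * ipL L f v := by
      intro v
      rw [ipL, ipL, Finset.mul_sum]
      apply Finset.sum_congr rfl
      intro p _
      rw [Pi.smul_apply, smul_eq_mul]
      ring
    show frameOp L a M g (c • f) l = (c • frameOp L a M g f) l
    rw [Pi.smul_apply, smul_eq_mul]
    simp only [frameOp]
    simp only [hip, Finset.mul_sum, mul_assoc]

end GaborAux2


set_option maxHeartbeats 1000000 in
/-- if `G(g,a,M)` is a Gabor frame on `ℂ^L` (invertible frame operator
`S`), then the canonical dual window `γ = S⁻¹g` is a dual window for `g` and is the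
unique minimizer of the `ℓ²`-norm among all dual windows: any other dual window `h`
satisfies `‖γ‖₂ < ‖h‖₂`. -/
theorem canonical_dual_minimal_norm
    (L a M : ℕ) [NeZero L] (ha : 0 < a) (hM : 0 < M) (haL : a ∣ L) (hML : M ∣ L)
    (g : ZMod L → ℂ)
    (hframe : Function.Bijective (frameOp L a M g))
    (γ : ZMod L → ℂ) (hγ : frameOp L a M g γ = g) :
    IsDualWindow L a M g γ ∧
    ∀ h : ZMod L → ℂ, IsDualWindow L a M g h → h ≠ γ →
      Real.sqrt (∑ l : ZMod L, ‖γ l‖ ^ 2) < Real.sqrt (∑ l : ZMod L, ‖h l‖ ^ 2) := by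
  have hLpos : 0 < L := Nat.pos_of_ne_zero (NeZero.ne L)
  haveI : NeZero (L/a) := ⟨(Nat.div_pos (Nat.le_of_dvd hLpos haL) ha).ne'⟩
  haveI : NeZero M := ⟨hM.ne'⟩
  haveI : NeZero a := ⟨ha.ne'⟩
  -- Part 1 : γ is a dual window
  have hdualγ : IsDualWindow L a M g γ := by
    intro f l
    obtain ⟨f', hf'⟩ := hframe.2 f
    have key : ∀ (nn : Fin (L/a)) (mm : Fin M),
        ipL L f (gaborAtom L M γ mm ((nn:ℕ) * a)) = ipL L f' (gaborAtom L M g mm ((nn:ℕ) * a)) := by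
      intro nn mm
      calc ipL L f (gaborAtom L M γ mm ((nn:ℕ)*a))
          = ipL L (frameOp L a M g f') (gaborAtom L M γ mm ((nn:ℕ)*a)) := by rw [hf']
        _ = ipL L f' (frameOp L a M g (gaborAtom L M γ mm ((nn:ℕ)*a))) :=
            frameOp_selfadj g f' (gaborAtom L M γ mm ((nn:ℕ)*a))
        _ = ipL L f' (gaborAtom L M (frameOp L a M g γ) mm ((nn:ℕ)*a)) := by
            rw [frameOp_atom ha hM haL hML]
        _ = ipL L f' (gaborAtom L M g mm ((nn:ℕ)*a)) := by rw [hγ]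
    calc f l = frameOp L a M g f' l := by rw [hf']
      _ = ∑ n : Fin (L/a), ∑ m : Fin M,
            ipL L f' (gaborAtom L M g m ((n:ℕ)*a)) * gaborAtom L M g m ((n:ℕ)*a) l := rfl
      _ = ∑ n : Fin (L/a), ∑ m : Fin M,
            ipL L f (gaborAtom L M γ m ((n:ℕ)*a)) * gaborAtom L M g m ((n:ℕ)*a) l := by
          apply Finset.sum_congr rfl
          intro n _
          apply Finset.sum_congr rfl
          intro m _
          rw [key n m]
  refine ⟨hdualγ, ?_⟩
  intro h hdualh hne
  set u : ZMod L → ℂ := h - γ with hu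
  -- the mixed frame-type operator with analysis window u vanishes
  have hmix : ∀ f : ZMod L → ℂ, ∀ l : ZMod L,
      ∑ p : ZMod L, (if modd M (l - p) = 0 then (M:ℂ) * KG2 L a u g l p * f p else 0) = 0 := by
    intro f l
    rw [← walnut_mixed ha hM haL hML u g f l]
    have hsub : ∀ (m c : ℕ), ipL L f (gaborAtom L M u m c)
        = ipL L f (gaborAtom L M h m c) - ipL L f (gaborAtom L M γ m c) := by
      intro m c
      rw [ipL, ipL, ipL, ← Finset.sum_sub_distrib]
      apply Finset.sum_congr rfl
      intro p _
      rw [gaborAtom, gaborAtom, gaborAtom]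
      show f p * star ((h - γ) (p - (c : ZMod L)) * _) = _
      rw [Pi.sub_apply, sub_mul, star_sub]
      ring
    calc ∑ n : Fin (L/a), ∑ m : Fin M,
          ipL L f (gaborAtom L M u m ((n:ℕ)*a)) * gaborAtom L M g m ((n:ℕ)*a) l
        = ∑ n : Fin (L/a), ∑ m : Fin M,
            (ipL L f (gaborAtom L M h m ((n:ℕ)*a)) * gaborAtom L M g m ((n:ℕ)*a) l
              - ipL L f (gaborAtom L M γ m ((n:ℕ)*a)) * gaborAtom L M g m ((n:ℕ)*a) l) := by
          apply Finset.sum_congr rfl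
          intro n _
          apply Finset.sum_congr rfl
          intro m _
          rw [hsub, sub_mul]
      _ = (∑ n : Fin (L/a), ∑ m : Fin M,
            ipL L f (gaborAtom L M h m ((n:ℕ)*a)) * gaborAtom L M g m ((n:ℕ)*a) l)
          - ∑ n : Fin (L/a), ∑ m : Fin M,
            ipL L f (gaborAtom L M γ m ((n:ℕ)*a)) * gaborAtom L M g m ((n:ℕ)*a) l := by
          rw [← Finset.sum_sub_distrib]
          apply Finset.sum_congr rfl
          intro n _
          rw [← Finset.sum_sub_distrib]
      _ = f l - f l := by rw [← hdualh f l, ← hdualγ f l]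
      _ = 0 := sub_self _
  -- pointwise biorthogonality relations
  have hKrel : ∀ l p : ZMod L, modd M (l - p) = 0 → KG2 L a u g l p = 0 := by
    intro l p hlp
    have hδ := hmix (fun q => if q = p then 1 else 0) l
    rw [Finset.sum_eq_single p (fun q _ hqp => by simp [hqp]) (fun hp => absurd (Finset.mem_univ p) hp)] at hδ
    simp only [if_pos rfl, if_pos hlp, mul_one] at hδ
    have hM0 : (M:ℂ) ≠ 0 := by exact_mod_cast hM.ne'
    rcases mul_eq_zero.1 hδ with h0 | h0
    · rcases mul_eq_zero.1 h0 with h1 | h1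
      · exact absurd h1 hM0
      · exact h1
    · exact absurd h0 one_ne_zero
  -- u is orthogonal to every generator
  have hBu : ∀ x t2 : ZMod L, modd M t2 = 0 → ipL L (Bwin L a g x t2) u = 0 := by
    intro x t2 ht2
    rw [ipL]
    have hbw : ∀ l : ZMod L, Bwin L a g x t2 l * star (u l)
        = (if modd a (l - x) = 0 then g (l - t2) * star (u l) else 0) := by
      intro l
      rw [Bwin]
      by_cases hc : modd a (l - x) = 0 <;> simp [hc]
    rw [Finset.sum_congr rfl (fun l _ => hbw l)]
    rw [coset_sum ha haL (fun l => g (l - t2) * star (u l)) x]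
    rw [show (∑ n : ZMod (L/a), g (x + iota L a n - t2) * star (u (x + iota L a n)))
        = ∑ n : ZMod (L/a), g (x + iota L a (-n) - t2) * star (u (x + iota L a (-n))) from
      Fintype.sum_equiv (Equiv.neg (ZMod (L/a)))
        (fun n => g (x + iota L a n - t2) * star (u (x + iota L a n)))
        (fun n => g (x + iota L a (-n) - t2) * star (u (x + iota L a (-n))))
        (fun n => by simp [Equiv.neg_apply])]
    have := hKrel (x - t2) x (by rw [show x - t2 - x = -t2 from by ring, modd_neg hML, ht2, neg_zero])
    rw [KG2] at this
    rw [← this]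
    apply Finset.sum_congr rfl
    intro n _
    rw [iota_neg haL]
    rw [show x + -iota L a n - t2 = x - t2 - iota L a n from by ring,
      show x + -iota L a n = x - iota L a n from by ring]
    ring
  -- the span of the generators
  set Vset : Set (ZMod L → ℂ) := {v | ∃ x t2 : ZMod L, modd M t2 = 0 ∧ v = Bwin L a g x t2}
    with hVset
  set V : Submodule ℂ (ZMod L → ℂ) := Submodule.span ℂ Vset with hV
  have hgV : g ∈ V := by
    have hLa0 : ((L/a : ℕ) : ℂ) ≠ 0 := by
      have : 0 < L / a := Nat.div_pos (Nat.le_of_dvd hLpos haL) ha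
      exact_mod_cast this.ne'
    have hsum : (((L/a : ℕ) : ℂ)) • g = ∑ x : ZMod L, Bwin L a g x 0 := by
      funext l
      rw [Finset.sum_apply, Pi.smul_apply, smul_eq_mul]
      have hbx : ∀ x : ZMod L, Bwin L a g x 0 l = (if modd a (x - l) = 0 then g l else 0) := by
        intro x
        rw [Bwin, sub_zero]
        by_cases hc : modd a (l - x) = 0
        · have hc' : modd a (x - l) = 0 := by
            rw [show x - l = -(l - x) from by ring, modd_neg haL, hc, neg_zero]
          simp [hc, hc']
        · have hc' : ¬ modd a (x - l) = 0 := fun hcc =>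
            hc (by rw [show l - x = -(x - l) from by ring, modd_neg haL, hcc, neg_zero])
          simp [hc, hc']
      rw [Finset.sum_congr rfl (fun x _ => hbx x)]
      rw [coset_sum ha haL (fun _ => g l) l]
      simp [ZMod.card, mul_comm]
    have : g = (((L/a : ℕ) : ℂ))⁻¹ • ((((L/a : ℕ) : ℂ)) • g) := by
      rw [smul_smul, inv_mul_cancel₀ hLa0, one_smul]
    rw [this, hsum]
    apply Submodule.smul_mem
    apply Submodule.sum_mem
    intro x _
    apply Submodule.subset_span
    exact ⟨x, 0, modd_zero M, rfl⟩
  have hSV : ∀ v ∈ V, frameOp L a M g v ∈ V := by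
    intro v hv
    induction hv using Submodule.span_induction with
    | mem v hvmem =>
        obtain ⟨x, t2, ht2, rfl⟩ := hvmem
        rw [frameOp_B ha hM haL hML]
        apply Submodule.sum_mem
        intro q _
        by_cases hq : modd M q = 0
        · apply Submodule.smul_mem
          apply Submodule.subset_span
          exact ⟨x + q, q + t2, by rw [modd_add hML, hq, ht2, add_zero], rfl⟩
        · rw [if_neg hq, zero_smul]
          exact V.zero_mem
    | zero =>
        have : frameOp L a M g 0 = 0 := (frameOpL L a M g).map_zero
        rw [this]
        exact V.zero_mem
    | add v w hvm hwm ihv ihw =>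
        have : frameOp L a M g (v + w) = frameOp L a M g v + frameOp L a M g w :=
          (frameOpL L a M g).map_add v w
        rw [this]
        exact V.add_mem ihv ihw
    | smul c v hvm ihv =>
        have : frameOp L a M g (c • v) = c • frameOp L a M g v :=
          (frameOpL L a M g).map_smul c v
        rw [this]
        exact V.smul_mem c ihv
  have hγV : γ ∈ V := by
    let e : V →ₗ[ℂ] V := (frameOpL L a M g).restrict (p := V) (q := V) (fun v hv => hSV v hv)
    have hinj : Function.Injective e := by
      intro v w hvw
      apply Subtype.ext
      apply hframe.1
      exact congrArg Subtype.val hvw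
    obtain ⟨⟨v, hvV⟩, hev⟩ := (LinearMap.injective_iff_surjective).1 hinj ⟨g, hgV⟩
    have hveq : frameOp L a M g v = g := congrArg Subtype.val hev
    have hvγ : v = γ := hframe.1 (by rw [hveq, hγ])
    rwa [← hvγ]
  have hipu : ∀ v ∈ V, ipL L v u = 0 := by
    intro v hv
    induction hv using Submodule.span_induction with
    | mem v hvmem =>
        obtain ⟨x, t2, ht2, rfl⟩ := hvmem
        exact hBu x t2 ht2
    | zero => simp [ipL]
    | add v w hvm hwm ihv ihw =>
        have : ipL L (v + w) u = ipL L v u + ipL L w u := by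
          rw [ipL, ipL, ipL, ← Finset.sum_add_distrib]
          apply Finset.sum_congr rfl
          intro p _
          rw [Pi.add_apply]
          ring
        rw [this, ihv, ihw, add_zero]
    | smul c v hvm ihv =>
        have : ipL L (c • v) u = c * ipL L v u := by
          rw [ipL, ipL, Finset.mul_sum]
          apply Finset.sum_congr rfl
          intro p _
          rw [Pi.smul_apply, smul_eq_mul]
          ring
        rw [this, ihv, mul_zero]
  have hγu : ipL L γ u = 0 := hipu γ hγV
  -- norm computation
  have hnorm : (∑ l : ZMod L, ‖h l‖ ^ 2) = (∑ l : ZMod L, ‖γ l‖ ^ 2) + ∑ l : ZMod L, ‖u l‖ ^ 2 := by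
    have hterm : ∀ l : ZMod L, ‖h l‖ ^ 2
        = ‖γ l‖ ^ 2 + ‖u l‖ ^ 2 + 2 * (γ l * (starRingEnd ℂ) (u l)).re := by
      intro l
      have hhl : h l = γ l + u l := by
        rw [hu, Pi.sub_apply]
        ring
      rw [hhl]
      rw [Complex.sq_norm, Complex.sq_norm, Complex.sq_norm]
      exact Complex.normSq_add (γ l) (u l)
    rw [Finset.sum_congr rfl (fun l _ => hterm l), Finset.sum_add_distrib,
      Finset.sum_add_distrib]
    have hzero : ∑ l : ZMod L, 2 * (γ l * (starRingEnd ℂ) (u l)).re = 0 := by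
      rw [← Finset.mul_sum, ← Complex.re_sum]
      have : ∑ l : ZMod L, γ l * (starRingEnd ℂ) (u l) = 0 := by
        rw [← hγu, ipL]
        rfl
      rw [this]
      simp
    rw [hzero, add_zero]
  have hupos : 0 < ∑ l : ZMod L, ‖u l‖ ^ 2 := by
    have hune : ∃ l, u l ≠ 0 := by
      by_contra hc
      push_neg at hc
      apply hne
      funext l
      have := hc l
      rw [hu, Pi.sub_apply, sub_eq_zero] at this
      exact this
    obtain ⟨l0, hl0⟩ := hune
    apply Finset.sum_pos' (fun l _ => by positivity)
    exact ⟨l0, Finset.mem_univ _, pow_pos (norm_pos_iff.mpr hl0) 2⟩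
  rw [hnorm]
  apply Real.sqrt_lt_sqrt
  · apply Finset.sum_nonneg
    intro l _
    positivity
  · exact lt_add_of_pos_right _ hupos
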